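/- Let V be a vector space over a field F, let {a,b} = [a,b] + λ(a) + μ(b) + s be a bi-affine bracket on V with Leibnizian Λ, and fix o ∈ V. Then the bilinear bracket [−,−] satisfies the Leibniz rule [[a,b],c] = [[a,c],b] + [a,[b,c]] for all a,b,c ∈ V if and only if the linearization of Λ at o vanishes, i.e. Λ̃_o(a,b,c) = 0 for all a,b,c ∈ V. (Equivalently: the linearization of {−,−} at o makes the tangent space at o a Leibniz algebra iff the linearization of the Leibnizian at o vanishes.) -/
import Mathlib


/-- For the bi-affine bracket `{a,b} = B a b + lam a + mu b + s` on a vector space `V`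
with Leibnizian `Λ(a,b,c) = {a,{b,c}} − {{a,b},c} + {{a,c},b}` and a fixed point `o`,
the bilinear bracket `B` satisfies the Leibniz rule if and only if the linearization
of `Λ` at `o` vanishes. -/
theorem leibniz_rule_iff_leibnizian_linearization_vanishes
    {F V : Type*} [Field F] [AddCommGroup V] [Module F V]
    (B : V →ₗ[F] V →ₗ[F] V) (lam mu : V →ₗ[F] V) (s o : V)
    (br : V → V → V) (hbr : ∀ a b, br a b = B a b + lam a + mu b + s)
    (Λ : V → V → V → V)
    (hΛ : ∀ a b c, Λ a b c = br a (br b c) - br (br a b) c + br (br a c) b) :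
    (∀ a b c : V, B (B a b) c = B (B a c) b + B a (B b c)) ↔
      (∀ a b c : V,
        Λ a b c - Λ a b o - Λ a o c - Λ o b c
          + Λ a o o + Λ o b o + Λ o o c - Λ o o o = 0) := by
  have key : ∀ a b c : V,
      Λ a b c - Λ a b o - Λ a o c - Λ o b c
          + Λ a o o + Λ o b o + Λ o o c - Λ o o o
        = B (a - o) (B (b - o) (c - o)) - B (B (a - o) (b - o)) (c - o)
            + B (B (a - o) (c - o)) (b - o) := by
    intro a b c
    simp only [hΛ, hbr, map_add, map_sub, LinearMap.add_apply, LinearMap.sub_apply]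
    abel
  constructor
  · intro h a b c
    rw [key]
    rw [h]
    abel
  · intro h a b c
    have := h (a + o) (b + o) (c + o)
    rw [key] at this
    simp only [add_sub_cancel_right] at this
    rw [eq_comm, ← sub_eq_zero, ← this]
    abel
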